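/- The probability generating functions φ_{n,p}(u) of the number of moves M_{n,p} of symbol p when running the Fisher-Yates algorithm on n symbols satisfy the recurrences φ_{n,p}(u) = (p/n)·φ_{p,p}(u) + (1 - p/n)·u for 1 ≤ p < n, and φ_{n,n}(u) = (u/n)·[1 + ∑_{p=1}^{n-1} φ_{n-1,p}(u)]. -/

import Mathlib

/-- The number of moves of a symbol in the Fisher–Yates algorithm, defined
recursively via the triangular decomposition.  At stage `k+1` (symbols
`0,…,k+1`), `q = π⁻¹(k+1)` is the position of the last symbol and
`σ = π ∘ τ(k+1,q)` fixes `k+1`.  The final trivial swap is counted (base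
case `1`). -/
def movesAux {N : ℕ} : ℕ → Equiv.Perm (Fin N) → Fin N → ℕ
  | 0, _, _ => 1
  | k + 1, π, p =>
    if h : k + 1 < N then
      let lst : Fin N := ⟨k + 1, h⟩
      let q := π⁻¹ lst
      if p = lst then
        if q = lst then 1 else 1 + movesAux k (π * Equiv.swap lst q) q
      else if p = q then 1 else movesAux k (π * Equiv.swap lst q) p
    else 1

/-- `moves π p` is the number of moves of symbol `p` (0-based; paper's symbol
`p+1`) when the Fisher–Yates algorithm produces `π ∈ Sₙ`. -/
def moves {n : ℕ} (π : Equiv.Perm (Fin n)) (p : Fin n) : ℕ :=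
  movesAux (n - 1) π p

/-- `phi n p u` is the probability generating function `φ_{n,p}(u)` of the
number of moves of symbol `p` (1-based) under Fisher–Yates on `n` symbols,
evaluated at `u`. -/
def phi (n p : ℕ) (u : ℚ) : ℚ :=
  if h : 1 ≤ p ∧ p ≤ n then
    (∑ π : Equiv.Perm (Fin n), u ^ moves π ⟨p - 1, by omega⟩) / n.factorial
  else 0

/-- extend a permutation of `Fin n` to `Fin (n+1)` fixing the last point. -/
def extLast {n : ℕ} (σ : Equiv.Perm (Fin n)) : Equiv.Perm (Fin (n + 1)) where
  toFun := Fin.lastCases (Fin.last n) (fun i => (σ i).castSucc)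
  invFun := Fin.lastCases (Fin.last n) (fun i => (σ⁻¹ i).castSucc)
  left_inv := by
    intro x
    cases x using Fin.lastCases <;> simp
  right_inv := by
    intro x
    cases x using Fin.lastCases <;> simp

@[simp] lemma extLast_castSucc {n : ℕ} (σ : Equiv.Perm (Fin n)) (p : Fin n) :
    extLast σ p.castSucc = (σ p).castSucc := by
  simp [extLast]

@[simp] lemma extLast_last {n : ℕ} (σ : Equiv.Perm (Fin n)) :
    extLast σ (Fin.last n) = Fin.last n := by
  simp [extLast]

@[simp] lemma extLast_inv {n : ℕ} (σ : Equiv.Perm (Fin n)) :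
    (extLast σ)⁻¹ = extLast σ⁻¹ := by
  refine inv_eq_of_mul_eq_one_right ?_
  ext x
  cases x using Fin.lastCases with
  | last => simp [Equiv.Perm.mul_apply]
  | cast i => simp [Equiv.Perm.mul_apply]

lemma extLast_injective {n : ℕ} : Function.Injective (extLast (n := n)) := by
  intro σ σ' h
  ext i
  have h2 := congrArg (fun π : Equiv.Perm (Fin (n+1)) => π i.castSucc) h
  simp only [extLast_castSucc] at h2
  exact congrArg Fin.val (Fin.castSucc_injective _ h2)

lemma extLast_mul_swap {n : ℕ} (σ : Equiv.Perm (Fin n)) (a b : Fin n) :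
    extLast σ * Equiv.swap a.castSucc b.castSucc = extLast (σ * Equiv.swap a b) := by
  ext x
  cases x using Fin.lastCases with
  | last =>
      have ha : Fin.last n ≠ a.castSucc := (Fin.castSucc_lt_last a).ne'
      have hb : Fin.last n ≠ b.castSucc := (Fin.castSucc_lt_last b).ne'
      simp [Equiv.Perm.mul_apply, Equiv.swap_apply_of_ne_of_ne ha hb]
  | cast i =>
      simp [Equiv.Perm.mul_apply,
        (Fin.castSucc_injective n).swap_apply]

lemma movesAux_succ {N : ℕ} (k : ℕ) (π : Equiv.Perm (Fin N)) (p : Fin N) :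
    movesAux (k + 1) π p =
      if h : k + 1 < N then
        let lst : Fin N := ⟨k + 1, h⟩
        let q := π⁻¹ lst
        if p = lst then
          if q = lst then 1 else 1 + movesAux k (π * Equiv.swap lst q) q
        else if p = q then 1 else movesAux k (π * Equiv.swap lst q) p
      else 1 := by
  rw [movesAux]

lemma movesAux_extLast {m : ℕ} (k : ℕ) (hk : k ≤ m) (σ : Equiv.Perm (Fin (m + 1)))
    (p : Fin (m + 1)) :
    movesAux (N := m + 2) k (extLast σ) p.castSucc = movesAux k σ p := by
  induction k generalizing σ p with
  | zero => rfl
  | succ k ih =>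
    have h1 : k + 1 < m + 2 := by omega
    have h2 : k + 1 < m + 1 := by omega
    rw [movesAux_succ, movesAux_succ, dif_pos h1, dif_pos h2]
    have hls : (⟨k + 1, h1⟩ : Fin (m + 2)) = (⟨k + 1, h2⟩ : Fin (m + 1)).castSucc := rfl
    set ls : Fin (m + 1) := ⟨k + 1, h2⟩ with hls'
    have hq : (extLast σ)⁻¹ (ls.castSucc) = (σ⁻¹ ls).castSucc := by
      rw [extLast_inv, extLast_castSucc]
    simp only [hls, hq, Fin.castSucc_inj, extLast_mul_swap σ ls (σ⁻¹ ls),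
      extLast_mul_swap]
    split_ifs with hA hB hC
    · rfl
    · rw [ih (by omega)]
    · rfl
    · rw [ih (by omega)]

noncomputable def S (n : ℕ) (p : Fin n) (u : ℚ) : ℚ :=
  ∑ π : Equiv.Perm (Fin n), u ^ moves π p

lemma decomp_bij (m : ℕ) :
    Function.Bijective (fun qs : Fin (m + 2) × Equiv.Perm (Fin (m + 1)) =>
      extLast qs.2 * Equiv.swap (Fin.last (m + 1)) qs.1) := by
  rw [Fintype.bijective_iff_injective_and_card]
  constructor
  · rintro ⟨q, σ⟩ ⟨q', σ'⟩ h
    simp only at h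
    have hq : q = q' := by
      have h2 := congrArg (fun π : Equiv.Perm (Fin (m + 2)) => π⁻¹ (Fin.last (m + 1))) h
      simpa [mul_inv_rev, Equiv.Perm.mul_apply] using h2
    subst hq
    have h3 : extLast σ = extLast σ' := mul_right_cancel h
    exact Prod.ext rfl (extLast_injective h3)
  · simp [Fintype.card_perm, Nat.factorial_succ]

lemma S_eq (m : ℕ) (p : Fin (m + 2)) (u : ℚ) :
    S (m + 2) p u = ∑ q : Fin (m + 2), ∑ σ : Equiv.Perm (Fin (m + 1)),
      u ^ movesAux (m + 1) (extLast σ * Equiv.swap (Fin.last (m + 1)) q) p := by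
  have h := Fintype.sum_bijective _ (decomp_bij m)
    (fun qs : Fin (m + 2) × Equiv.Perm (Fin (m + 1)) =>
      u ^ movesAux (m + 1) (extLast qs.2 * Equiv.swap (Fin.last (m + 1)) qs.1) p)
    (fun π => u ^ moves π p) (fun x => rfl)
  rw [S, ← h, Fintype.sum_prod_type]

lemma movesAux_top (m : ℕ) (σ : Equiv.Perm (Fin (m + 1))) (q p : Fin (m + 2)) :
    movesAux (m + 1) (extLast σ * Equiv.swap (Fin.last (m + 1)) q) p =
      if p = Fin.last (m + 1) then
        (if q = Fin.last (m + 1) then 1 else 1 + movesAux m (extLast σ) q)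
      else if p = q then 1 else movesAux m (extLast σ) p := by
  rw [movesAux_succ, dif_pos (by omega : m + 1 < m + 2)]
  have hl : (⟨m + 1, by omega⟩ : Fin (m + 2)) = Fin.last (m + 1) := rfl
  have hq : (extLast σ * Equiv.swap (Fin.last (m + 1)) q)⁻¹ (Fin.last (m + 1)) = q := by
    simp [mul_inv_rev, Equiv.Perm.mul_apply]
  have hs : (extLast σ * Equiv.swap (Fin.last (m + 1)) q) * Equiv.swap (Fin.last (m + 1)) q
      = extLast σ := by
    rw [mul_assoc, Equiv.swap_mul_self, mul_one]
  simp only [hl, hq, hs]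

lemma card_perm_fin (m : ℕ) : Fintype.card (Equiv.Perm (Fin (m + 1))) = (m + 1).factorial := by
  simp [Fintype.card_perm]

lemma S_last (m : ℕ) (u : ℚ) :
    S (m + 2) (Fin.last (m + 1)) u =
      (m + 1).factorial * u + u * ∑ p : Fin (m + 1), S (m + 1) p u := by
  rw [S_eq, Fin.sum_univ_castSucc]
  have hlast : ∑ σ : Equiv.Perm (Fin (m + 1)),
      u ^ movesAux (m + 1)
        (extLast σ * Equiv.swap (Fin.last (m + 1)) (Fin.last (m + 1))) (Fin.last (m + 1))
      = (m + 1).factorial * u := by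
    have e : ∀ σ : Equiv.Perm (Fin (m + 1)), movesAux (m + 1)
        (extLast σ * Equiv.swap (Fin.last (m + 1)) (Fin.last (m + 1))) (Fin.last (m + 1))
        = 1 := by
      intro σ; rw [movesAux_top, if_pos rfl, if_pos rfl]
    simp only [e, pow_one]
    rw [Finset.sum_const, Finset.card_univ, card_perm_fin, nsmul_eq_mul]
  rw [hlast]
  have hcast : ∀ q : Fin (m + 1), ∑ σ : Equiv.Perm (Fin (m + 1)),
      u ^ movesAux (m + 1)
        (extLast σ * Equiv.swap (Fin.last (m + 1)) q.castSucc) (Fin.last (m + 1))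
      = u * S (m + 1) q u := by
    intro q
    have hne : q.castSucc ≠ Fin.last (m + 1) := (Fin.castSucc_lt_last q).ne
    have e : ∀ σ : Equiv.Perm (Fin (m + 1)), movesAux (m + 1)
        (extLast σ * Equiv.swap (Fin.last (m + 1)) q.castSucc) (Fin.last (m + 1))
        = 1 + moves σ q := by
      intro σ
      rw [movesAux_top, if_pos rfl, if_neg hne, movesAux_extLast m le_rfl σ q]
      rfl
    simp only [e, pow_add, pow_one]
    rw [S, Finset.mul_sum]
  rw [Finset.sum_congr rfl fun q _ => hcast q, ← Finset.mul_sum]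
  ring

lemma S_castSucc (m : ℕ) (p : Fin (m + 1)) (u : ℚ) :
    S (m + 2) p.castSucc u = (m + 1).factorial * u + (m + 1) * S (m + 1) p u := by
  rw [S_eq]
  have hne : p.castSucc ≠ Fin.last (m + 1) := (Fin.castSucc_lt_last p).ne
  have key : ∀ q : Fin (m + 2), ∑ σ : Equiv.Perm (Fin (m + 1)),
      u ^ movesAux (m + 1) (extLast σ * Equiv.swap (Fin.last (m + 1)) q) p.castSucc
      = if p.castSucc = q then ((m + 1).factorial : ℚ) * u else S (m + 1) p u := by
    intro q
    split_ifs with h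
    · have e : ∀ σ : Equiv.Perm (Fin (m + 1)), movesAux (m + 1)
          (extLast σ * Equiv.swap (Fin.last (m + 1)) q) p.castSucc = 1 := by
        intro σ; rw [movesAux_top, if_neg hne, if_pos h]
      simp only [e, pow_one]
      rw [Finset.sum_const, Finset.card_univ, card_perm_fin, nsmul_eq_mul]
    · have e : ∀ σ : Equiv.Perm (Fin (m + 1)), movesAux (m + 1)
          (extLast σ * Equiv.swap (Fin.last (m + 1)) q) p.castSucc = moves σ p := by
        intro σ
        rw [movesAux_top, if_neg hne, if_neg h, movesAux_extLast m le_rfl σ p]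
        rfl
      simp only [e]
      rw [S]
  rw [Finset.sum_congr rfl fun q _ => key q]
  have split : ∀ q : Fin (m + 2),
      (if p.castSucc = q then ((m + 1).factorial : ℚ) * u else S (m + 1) p u)
      = S (m + 1) p u + (if p.castSucc = q
          then ((m + 1).factorial : ℚ) * u - S (m + 1) p u else 0) := by
    intro q; split_ifs <;> ring
  rw [Finset.sum_congr rfl fun q _ => split q, Finset.sum_add_distrib,
    Finset.sum_ite_eq, if_pos (Finset.mem_univ _), Finset.sum_const,
    Finset.card_univ, Fintype.card_fin]
  ring

lemma phi_eq (n p : ℕ) (h1 : 1 ≤ p) (h2 : p ≤ n) (u : ℚ) :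
    phi n p u = S n ⟨p - 1, by omega⟩ u / n.factorial := by
  rw [phi, dif_pos ⟨h1, h2⟩]; rfl

lemma phiC (n p : ℕ) (hp : 1 ≤ p) (hpn : p < n) (u : ℚ) :
    phi n p u = u / n + ((n : ℚ) - 1) / n * phi (n - 1) p u := by
  obtain ⟨m, rfl⟩ : ∃ m, n = m + 2 := ⟨n - 2, by omega⟩
  rw [phi_eq _ _ hp (by omega), phi_eq _ _ hp (by omega)]
  have hc : (⟨p - 1, by omega⟩ : Fin (m + 2)) =
      (⟨p - 1, by omega⟩ : Fin (m + 1)).castSucc := rfl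
  rw [hc, S_castSucc]
  have h1 : ((m + 2).factorial : ℚ) = (m + 2) * (m + 1).factorial := by
    rw [Nat.factorial_succ]; push_cast; ring
  have h2 : ((m + 1).factorial : ℚ) ≠ 0 := by
    exact_mod_cast Nat.factorial_ne_zero (m + 1)
  have h3 : ((m : ℚ) + 2) ≠ 0 := by positivity
  have h4 : (((m + 2 : ℕ) : ℚ)) = (m : ℚ) + 2 := by push_cast; ring
  have h5 : (((m + 2 : ℕ) - 1 : ℕ) : ℚ) = (m : ℚ) + 1 := by norm_num
  rw [h1, h4]
  show _ = u / ((m : ℚ) + 2) + ((m : ℚ) + 2 - 1) / ((m : ℚ) + 2) *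
      (S (m + 2 - 1) ⟨p - 1, by omega⟩ u / ((m + 2 - 1).factorial))
  norm_num
  field_simp
  ring
  rfl

lemma phiD (n : ℕ) (hn : 2 ≤ n) (u : ℚ) :
    phi n n u = (u / n) * (1 + ∑ p ∈ Finset.Icc 1 (n - 1), phi (n - 1) p u) := by
  obtain ⟨m, rfl⟩ : ∃ m, n = m + 2 := ⟨n - 2, by omega⟩
  rw [phi_eq _ _ (by omega) le_rfl]
  have hc : (⟨m + 2 - 1, by omega⟩ : Fin (m + 2)) = Fin.last (m + 1) := rfl
  rw [hc, S_last]
  have hIcc : ∑ p ∈ Finset.Icc 1 (m + 1), phi (m + 1) p u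
      = (∑ q : Fin (m + 1), S (m + 1) q u) / (m + 1).factorial := by
    rw [Finset.sum_div]
    refine Finset.sum_bij' (i := fun p hp => (⟨p - 1, by
        simp only [Finset.mem_Icc] at hp; omega⟩ : Fin (m + 1)))
      (j := fun q _ => (q : ℕ) + 1) ?_ ?_ ?_ ?_ ?_
    · intro a ha
      exact Finset.mem_univ _
    · intro q _
      simp only [Finset.mem_Icc]
      omega
    · intro a ha
      simp only [Finset.mem_Icc] at ha
      simp only []
      omega
    · intro q _
      simp
    · intro p hp
      simp only [Finset.mem_Icc] at hp
      rw [phi_eq _ _ hp.1 (by omega)]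
  rw [show m + 2 - 1 = m + 1 from rfl, hIcc]
  have h1 : ((m + 2).factorial : ℚ) = ((m : ℚ) + 2) * (m + 1).factorial := by
    rw [Nat.factorial_succ]; push_cast; ring
  have h2 : ((m + 1).factorial : ℚ) ≠ 0 := by
    exact_mod_cast Nat.factorial_ne_zero (m + 1)
  have h3 : ((m : ℚ) + 2) ≠ 0 := by positivity
  have h4 : (((m + 2 : ℕ) : ℚ)) = (m : ℚ) + 2 := by push_cast; ring
  rw [h1, h4]
  field_simp

/-- The recurrences `φ_{n,p}(u) = (p/n)·φ_{p,p}(u) + (1 - p/n)·u` for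
`1 ≤ p < n`, and `φ_{n,n}(u) = (u/n)·[1 + ∑_{p=1}^{n-1} φ_{n-1,p}(u)]`. -/
theorem phi_recurrences :
    (∀ n p : ℕ, 1 ≤ p → p < n → ∀ u : ℚ,
      phi n p u = (p / n) * phi p p u + (1 - p / n) * u) ∧
    (∀ n : ℕ, 1 ≤ n → ∀ u : ℚ,
      phi n n u = (u / n) * (1 + ∑ p ∈ Finset.Icc 1 (n - 1), phi (n - 1) p u)) := by
  constructor
  · intro n p hp hpn u
    induction n, hpn using Nat.le_induction with
    | base =>
        rw [phiC (p + 1) p hp (by omega), show p + 1 - 1 = p from rfl]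
        have hp1 : ((p : ℚ) + 1) ≠ 0 := by positivity
        push_cast
        field_simp
        ring
    | succ n hn ih =>
        rw [phiC (n + 1) p hp (by omega), show n + 1 - 1 = n from rfl, ih]
        have hn0 : (n : ℚ) ≠ 0 := Nat.cast_ne_zero.mpr (by omega)
        have hn1 : ((n : ℚ) + 1) ≠ 0 := by positivity
        push_cast
        field_simp
        ring
  · intro n hn u
    match n, hn with
    | 1, _ =>
        rw [phi_eq 1 1 le_rfl le_rfl]
        simp [S, moves, movesAux, Nat.factorial]
    | (m + 2), _ =>
        exact phiD (m + 2) (by omega) u
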